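/- Let E ⊆ [0,∞), let τ̃ be an almost decreasing sequence in E∖{0} with limit 0, and let {(aₙ⁽¹⁾,bₙ⁽¹⁾)}, {(aₙ⁽²⁾,bₙ⁽²⁾)} ∈ Ĩ_E satisfy ã⁽¹⁾ ≍ τ̃ and ã⁽²⁾ ≍ τ̃. Then there exists N₀ such that (aₙ⁽¹⁾,bₙ⁽¹⁾) = (aₙ⁽²⁾,bₙ⁽²⁾) for all n ≥ N₀. -/

import Mathlib

open Filter Set Topology ENNReal

/-- λ(E,0,h): the supremum of lengths of open subintervals of (0,h) disjoint from E. -/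
noncomputable def lambda0 (E : Set ℝ) (h : ℝ) : ℝ :=
  sSup {l : ℝ | ∃ a b : ℝ, 0 ≤ a ∧ a ≤ b ∧ b ≤ h ∧ Set.Ioo a b ∩ E = ∅ ∧ l = b - a}

/-- p⁺(E,0): the right porosity of E at 0. -/
noncomputable def porosity (E : Set ℝ) : ℝ :=
  Filter.limsup (fun h => lambda0 E h / h) (nhdsWithin 0 (Set.Ioi 0))

/-- 0 is an accumulation point of E (E ⊆ [0,∞), relative topology of [0,∞)). -/
def AccZero (E : Set ℝ) : Prop := ∀ ε > 0, ∃ x ∈ E, 0 < x ∧ x < ε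

/-- (a,b) is a connected component of the exterior of E in [0,∞):
an open interval in [0,∞) disjoint from E, maximal with this property. -/
def IsCompExt (E : Set ℝ) (a b : ℝ) : Prop :=
  0 ≤ a ∧ a < b ∧ Set.Ioo a b ∩ E = ∅ ∧
  ∀ c d : ℝ, 0 ≤ c → Set.Ioo a b ⊆ Set.Ioo c d → (c, d) ≠ (a, b) → Set.Ioo c d ∩ E ≠ ∅

/-- Membership in Ĩ_E. -/
def memIE (E : Set ℝ) (A : ℕ → ℝ × ℝ) : Prop :=
  (∀ n, 0 < (A n).1) ∧ (∀ n, IsCompExt E (A n).1 (A n).2) ∧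
  Filter.Tendsto (fun n => (A n).1) Filter.atTop (nhds 0) ∧
  Filter.Tendsto (fun n => ((A n).2 - (A n).1) / (A n).2) Filter.atTop (nhds 1)

/-- Almost decreasing sequence: eventually nonincreasing. -/
def AlmostDecr (τ : ℕ → ℝ) : Prop := ∀ᶠ n in Filter.atTop, τ (n + 1) ≤ τ n

/-- Membership in Ẽ₀^d: almost decreasing sequences in E∖{0} tending to 0. -/
def memE0d (E : Set ℝ) (τ : ℕ → ℝ) : Prop :=
  AlmostDecr τ ∧ Filter.Tendsto τ Filter.atTop (nhds 0) ∧ ∀ n, τ n ∈ E \ {0}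

/-- Weak equivalence ≍ of sequences: c₁ aₙ ≤ γₙ ≤ c₂ aₙ for large n. -/
def SeqEquiv (a γ : ℕ → ℝ) : Prop :=
  ∃ c₁ c₂ : ℝ, 0 < c₁ ∧ 0 < c₂ ∧ ∀ᶠ n in Filter.atTop, c₁ * a n ≤ γ n ∧ γ n ≤ c₂ * a n

/-- E is τ̃-strongly porous. -/
def StronglyPorousWrt (E : Set ℝ) (τ : ℕ → ℝ) : Prop :=
  ∃ A : ℕ → ℝ × ℝ, memIE E A ∧ SeqEquiv (fun n => (A n).1) τ

/-- E is completely strongly porous at 0. -/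
def CSP (E : Set ℝ) : Prop := ∀ τ : ℕ → ℝ, memE0d E τ → StronglyPorousWrt E τ

/-- Membership in Ĩ_E^d: first coordinates almost decreasing. -/
def memIEd (E : Set ℝ) (A : ℕ → ℝ × ℝ) : Prop := memIE E A ∧ AlmostDecr (fun n => (A n).1)

/-- Membership in Ĩ_E^{sd}: first coordinates eventually strictly decreasing. -/
def memIEsd (E : Set ℝ) (A : ℕ → ℝ × ℝ) : Prop :=
  memIE E A ∧ ∀ᶠ n in Filter.atTop, (A (n + 1)).1 < (A n).1

/-- The preorder Ã ⪯ L̃. -/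
def Prec (A L : ℕ → ℝ × ℝ) : Prop :=
  ∃ N₁ : ℕ, ∃ f : ℕ → ℕ, ∀ n ≥ N₁, (A n).1 = (L (f n)).1

/-- L̃ is universal: every Ã ∈ Ĩ_E^d satisfies Ã ⪯ L̃. -/
def Universal (E : Set ℝ) (L : ℕ → ℝ × ℝ) : Prop :=
  ∀ A : ℕ → ℝ × ℝ, memIEd E A → Prec A L

/-- M(L̃) = limsup lₙ/mₙ₊₁ (in [0,∞]). -/
noncomputable def Mq (L : ℕ → ℝ × ℝ) : ℝ≥0∞ :=
  Filter.limsup (fun n => ENNReal.ofReal ((L n).1 / (L (n + 1)).2)) Filter.atTop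

/-- C(τ̃) = inf over {(aₙ,bₙ)} ∈ Ĩ_E with τₙ ≤ aₙ eventually of limsup aₙ/τₙ. -/
noncomputable def Cseq (E : Set ℝ) (τ : ℕ → ℝ) : ℝ≥0∞ :=
  ⨅ (A : ℕ → ℝ × ℝ) (_ : memIE E A ∧ ∀ᶠ n in Filter.atTop, τ n ≤ (A n).1),
    Filter.limsup (fun n => ENNReal.ofReal ((A n).1 / τ n)) Filter.atTop

/-- C_E = sup over τ̃ ∈ Ẽ₀^d of C(τ̃). -/
noncomputable def CE (E : Set ℝ) : ℝ≥0∞ := ⨆ (τ : ℕ → ℝ) (_ : memE0d E τ), Cseq E τ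

/-- E is uniformly strongly porous at 0. -/
def USP (E : Set ℝ) : Prop :=
  ∃ c : ℝ, 0 < c ∧ ∀ τ : ℕ → ℝ, memE0d E τ → ∃ A : ℕ → ℝ × ℝ, memIE E A ∧
    (∀ᶠ n in Filter.atTop, τ n ≤ (A n).1) ∧
    Filter.limsup (fun n => ENNReal.ofReal ((A n).1 / τ n)) Filter.atTop ≤ ENNReal.ofReal c

lemma comp_eq_or_disj {E : Set ℝ} {a b a' b' : ℝ}
    (h : IsCompExt E a b) (h' : IsCompExt E a' b') :
    (a, b) = (a', b') ∨ Set.Ioo a b ∩ Set.Ioo a' b' = ∅ := by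
  by_cases hd : Set.Ioo a b ∩ Set.Ioo a' b' = ∅
  · exact Or.inr hd
  left
  obtain ⟨h0, hab, hEa, hmax⟩ := h
  obtain ⟨h0', hab', hEa', hmax'⟩ := h'
  obtain ⟨x, hx1, hx2⟩ := Set.nonempty_iff_ne_empty.2 hd
  have hunion : Set.Ioo a b ∪ Set.Ioo a' b' = Set.Ioo (min a a') (max b b') :=
    Set.Ioo_union_Ioo' (lt_trans hx2.1 hx1.2) (lt_trans hx1.1 hx2.2)
  have hempty : Set.Ioo (min a a') (max b b') ∩ E = ∅ := by
    rw [← hunion, Set.union_inter_distrib_right, hEa, hEa', Set.union_empty]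
  have key1 : (min a a', max b b') = (a, b) := by
    by_contra hne
    exact hmax _ _ (le_min h0 h0') (hunion ▸ Set.subset_union_left) hne hempty
  have key2 : (min a a', max b b') = (a', b') := by
    by_contra hne
    exact hmax' _ _ (le_min h0 h0') (hunion ▸ Set.subset_union_right) hne hempty
  rw [← key1, key2]

theorem stmt6 (E : Set ℝ) (hE : E ⊆ Set.Ici 0) (τ : ℕ → ℝ) (hτ : memE0d E τ)
    (A₁ A₂ : ℕ → ℝ × ℝ) (hA₁ : memIE E A₁) (hA₂ : memIE E A₂)
    (h₁ : SeqEquiv (fun n => (A₁ n).1) τ) (h₂ : SeqEquiv (fun n => (A₂ n).1) τ) :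
    ∃ N₀ : ℕ, ∀ n ≥ N₀, A₁ n = A₂ n := by
  obtain ⟨c1, c2, hc1, hc2, hcev⟩ := h₁
  obtain ⟨d1, d2, hd1, hd2, hdev⟩ := h₂
  -- positivity facts
  have ha1 : ∀ n, 0 < (A₁ n).1 := hA₁.1
  have ha2 : ∀ n, 0 < (A₂ n).1 := hA₂.1
  have hb1 : ∀ n, 0 < (A₁ n).2 := fun n => lt_trans (ha1 n) (hA₁.2.1 n).2.1
  have hb2 : ∀ n, 0 < (A₂ n).2 := fun n => lt_trans (ha2 n) (hA₂.2.1 n).2.1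
  -- a/b tends to 0 for both
  have hr1 : Filter.Tendsto (fun n => (A₁ n).1 / (A₁ n).2) Filter.atTop (nhds 0) := by
    have := (tendsto_const_nhds (x := (1:ℝ)) (f := Filter.atTop)).sub hA₁.2.2.2
    rw [sub_self] at this
    refine this.congr (fun n => ?_)
    have hb := (hb1 n).ne'
    field_simp
    ring
  have hr2 : Filter.Tendsto (fun n => (A₂ n).1 / (A₂ n).2) Filter.atTop (nhds 0) := by
    have := (tendsto_const_nhds (x := (1:ℝ)) (f := Filter.atTop)).sub hA₂.2.2.2
    rw [sub_self] at this
    refine this.congr (fun n => ?_)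
    have hb := (hb2 n).ne'
    field_simp
    ring
  have hε1 : (0:ℝ) < d1 / c2 := div_pos hd1 hc2
  have hε2 : (0:ℝ) < c1 / d2 := div_pos hc1 hd2
  have hev1 : ∀ᶠ n in Filter.atTop, (A₁ n).1 / (A₁ n).2 < d1 / c2 :=
    hr1.eventually_lt_const hε1
  have hev2 : ∀ᶠ n in Filter.atTop, (A₂ n).1 / (A₂ n).2 < c1 / d2 :=
    hr2.eventually_lt_const hε2
  obtain ⟨N, hN⟩ := ((hcev.and hdev).and (hev1.and hev2)).exists_forall_of_atTop
  refine ⟨N, fun n hn => ?_⟩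
  obtain ⟨⟨⟨hc1n, hc2n⟩, ⟨hd1n, hd2n⟩⟩, hr1n, hr2n⟩ := hN n hn
  rcases comp_eq_or_disj (hA₁.2.1 n) (hA₂.2.1 n) with heq | hdisj
  · have e1 : (A₁ n).1 = (A₂ n).1 := congrArg Prod.fst heq
    have e2 : (A₁ n).2 = (A₂ n).2 := congrArg Prod.snd heq
    exact Prod.ext e1 e2
  exfalso
  -- disjoint intervals: either b₁ ≤ a₂ or b₂ ≤ a₁
  have hcase : (A₁ n).2 ≤ (A₂ n).1 ∨ (A₂ n).2 ≤ (A₁ n).1 := by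
    by_contra hcon
    push_neg at hcon
    have hx : max (A₁ n).1 (A₂ n).1 < min (A₁ n).2 (A₂ n).2 := by
      rcases hcon with ⟨h1, h2⟩
      simp only [max_lt_iff, lt_min_iff]
      exact ⟨⟨(hA₁.2.1 n).2.1, h1⟩, ⟨h2, (hA₂.2.1 n).2.1⟩⟩
    obtain ⟨y, hy1, hy2⟩ := exists_between hx
    have : y ∈ Set.Ioo (A₁ n).1 (A₁ n).2 ∩ Set.Ioo (A₂ n).1 (A₂ n).2 := by
      constructor
      · exact ⟨lt_of_le_of_lt (le_max_left _ _) hy1, lt_of_lt_of_le hy2 (min_le_left _ _)⟩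
      · exact ⟨lt_of_le_of_lt (le_max_right _ _) hy1, lt_of_lt_of_le hy2 (min_le_right _ _)⟩
    rw [hdisj] at this
    exact this
  rcases hcase with hle | hle
  · -- b₁ ≤ a₂ : a₁/b₁ ≥ a₁/a₂ ≥ d1/c2
    have k1 : (A₁ n).1 / (A₂ n).1 ≤ (A₁ n).1 / (A₁ n).2 :=
      div_le_div_of_nonneg_left (le_of_lt (ha1 n)) (hb1 n) hle
    have k2 : d1 / c2 ≤ (A₁ n).1 / (A₂ n).1 := by
      rw [div_le_div_iff₀ hc2 (ha2 n)]
      nlinarith [hd1n, hc2n]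
    linarith
  · have k1 : (A₂ n).1 / (A₁ n).1 ≤ (A₂ n).1 / (A₂ n).2 :=
      div_le_div_of_nonneg_left (le_of_lt (ha2 n)) (hb2 n) hle
    have k2 : c1 / d2 ≤ (A₂ n).1 / (A₁ n).1 := by
      rw [div_le_div_iff₀ hd2 (ha1 n)]
      nlinarith [hc1n, hd2n]
    linarith
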